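/- Fix reals V, t, H, L with t > 0, 0 < L < H, H − L < 2t and V − t − H > 0, and set x̲ = 1 − (H−L)/(2t). Let x** = max{x̲, 1/2}. Then x** ∈ [x̲,1], x** ≤ max{x̲, 1/2, 1 − x̲·(H−L)/L}, and there exist payments (m, m₁) such that the threshold mechanism with threshold x** satisfies constraints (IC2), (IC1a), (IC1b) and (IR) (obedience is not required), and its revenue x̲·m₁ + ∫_{x̲}^{1} m(x) dx is greater than or equal to the revenue of every reduced mechanism satisfying (IC2), (IC1a), (IC1b) and (IR). -/

import Mathlib

open MeasureTheory Set intervalIntegral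

lemma intInt_of_bdd {f : ℝ → ℝ} {a b C : ℝ} (hab : a ≤ b) (hf : Measurable f)
    (h : ∀ x ∈ Set.Ioc a b, |f x| ≤ C) : IntervalIntegrable f volume a b := by
  rw [intervalIntegrable_iff, uIoc_of_le hab]
  refine ⟨hf.aestronglyMeasurable, ?_⟩
  apply MeasureTheory.HasFiniteIntegral.of_bounded (C := C)
  filter_upwards [ae_restrict_mem measurableSet_Ioc] with x hx
  simpa [Real.norm_eq_abs] using h x hx

lemma envelope {t A B : ℝ} {u f : ℝ → ℝ} (ht : 0 < t)
    (hanti : AntitoneOn f (Set.Icc A B))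
    (hbd : ∀ x ∈ Set.Icc A B, |f x| ≤ 1)
    (hIC : ∀ p ∈ Set.Icc A B, ∀ q ∈ Set.Icc A B, u p - u q ≥ t * (f q * (q - p))) :
    ∀ a ∈ Set.Icc A B, ∀ b ∈ Set.Icc A B, u a - u b ≥ t * ∫ τ in a..b, f τ := by
  have key : ∀ a ∈ Set.Icc A B, ∀ b ∈ Set.Icc A B, a < b →
      (u a - u b ≥ t * ∫ τ in a..b, f τ) ∧ (u b - u a ≥ -(t * ∫ τ in a..b, f τ)) := by
    intro a ha b hb hab
    have hba : 0 < b - a := by linarith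
    -- error bound for each n
    have main : ∀ n : ℕ, 0 < n →
        (u a - u b ≥ t * (∫ τ in a..b, f τ) - 2*t*(b-a)/n) ∧
        (u b - u a ≥ -(t * (∫ τ in a..b, f τ)) - 2*t*(b-a)/n) := by
      intro n hn
      set h : ℝ := (b - a)/n with hh_def
      have hn' : (0:ℝ) < n := by exact_mod_cast hn
      have hh : 0 < h := by positivity
      set s : ℕ → ℝ := fun i => a + i * h with hs_def
      have hs0 : s 0 = a := by simp [hs_def]
      have hsn : s n = b := by
        simp only [hs_def, hh_def]; field_simp; ring
      have hstep : ∀ i : ℕ, s (i+1) - s i = h := by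
        intro i; simp only [hs_def]; push_cast; ring
      have hsmono : ∀ i : ℕ, s i ≤ s (i+1) := by
        intro i; have := hstep i; linarith
      have hsmem : ∀ i : ℕ, i ≤ n → s i ∈ Set.Icc A B := by
        intro i hi
        have hiR : (i:ℝ) ≤ n := by exact_mod_cast hi
        have h1 : s i ≤ b := by
          have : (i:ℝ) * h ≤ n * h := mul_le_mul_of_nonneg_right hiR hh.le
          have hnh : (n:ℝ) * h = b - a := by rw [hh_def]; field_simp
          simp only [hs_def]; linarith
        have h2 : a ≤ s i := by
          have : 0 ≤ (i:ℝ) * h := by positivity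
          simp only [hs_def]; linarith
        exact ⟨le_trans ha.1 h2, le_trans h1 hb.2⟩
      have hsubset : ∀ i : ℕ, i < n → Set.Icc (s i) (s (i+1)) ⊆ Set.Icc A B := by
        intro i hi
        exact Set.Icc_subset_Icc (hsmem i hi.le).1 (hsmem (i+1) hi).2
      have hint : ∀ i : ℕ, i < n → IntervalIntegrable f volume (s i) (s (i+1)) := by
        intro i hi
        apply AntitoneOn.intervalIntegrable
        apply hanti.mono
        rw [Set.uIcc_of_le (hsmono i)]
        exact hsubset i hi
      have hsum : ∑ i ∈ Finset.range n, ∫ τ in s i..s (i+1), f τ = ∫ τ in a..b, f τ := by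
        rw [intervalIntegral.sum_integral_adjacent_intervals hint, hs0, hsn]
      -- per-interval bounds
      have hup : ∀ i : ℕ, i < n → (∫ τ in s i..s (i+1), f τ) ≤ h * f (s i) := by
        intro i hi
        have := intervalIntegral.integral_mono_on (μ := volume) (hsmono i) (hint i hi)
          intervalIntegrable_const
          (f := f) (g := fun _ => f (s i)) ?_
        · simpa [hstep i, mul_comm] using this
        · intro x hx
          exact hanti (hsmem i hi.le) (hsubset i hi hx) hx.1
      have hlo : ∀ i : ℕ, i < n → h * f (s (i+1)) ≤ ∫ τ in s i..s (i+1), f τ := by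
        intro i hi
        have := intervalIntegral.integral_mono_on (μ := volume) (hsmono i)
          intervalIntegrable_const (hint i hi)
          (f := fun _ => f (s (i+1))) (g := f) ?_
        · simpa [hstep i, mul_comm] using this
        · intro x hx
          exact hanti (hsubset i hi hx) (hsmem (i+1) hi) hx.2
      set SL : ℝ := ∑ i ∈ Finset.range n, h * f (s i) with hSL_def
      set SR : ℝ := ∑ i ∈ Finset.range n, h * f (s (i+1)) with hSR_def
      have hSL : (∫ τ in a..b, f τ) ≤ SL := by
        rw [← hsum]; exact Finset.sum_le_sum (fun i hi => hup i (Finset.mem_range.mp hi))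
      have hSR : SR ≤ ∫ τ in a..b, f τ := by
        rw [← hsum]; exact Finset.sum_le_sum (fun i hi => hlo i (Finset.mem_range.mp hi))
      have hshift : SR - SL = h * (f b - f a) := by
        have h1 := Finset.sum_range_sub (fun i => h * f (s i)) n
        rw [hSR_def, hSL_def, ← Finset.sum_sub_distrib]
        rw [h1, hs0, hsn]; ring
      have hfa1 : -1 ≤ f a ∧ f a ≤ 1 := abs_le.mp (hbd a ha)
      have hfb1 : -1 ≤ f b ∧ f b ≤ 1 := abs_le.mp (hbd b hb)
      have hth : 0 < t * h := mul_pos ht hh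
      have m1 : t * (∫ τ in a..b, f τ) ≤ t * SL := mul_le_mul_of_nonneg_left hSL ht.le
      have m1' : t * SR ≤ t * (∫ τ in a..b, f τ) := mul_le_mul_of_nonneg_left hSR ht.le
      have hQ : t * SR - t * SL = t * (h * (f b - f a)) := by rw [← mul_sub, hshift]
      have m2 : t * (h * (f b - f a)) ≥ -(2*(t*h)) := by nlinarith [hfa1.1, hfa1.2, hfb1.1, hfb1.2]
      have m3 : 2*(t*h) = 2*t*(b-a)/n := by rw [hh_def]; ring
      constructor
      · have hterm : ∀ i ∈ Finset.range n, t * (h * f (s (i+1))) ≤ u (s i) - u (s (i+1)) := by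
          intro i hi
          rw [Finset.mem_range] at hi
          have h2 := hIC (s i) (hsmem i hi.le) (s (i+1)) (hsmem (i+1) hi)
          have hst := hstep i
          calc t * (h * f (s (i+1))) = t * (f (s (i+1)) * (s (i+1) - s i)) := by rw [hst]; ring
            _ ≤ u (s i) - u (s (i+1)) := h2
        have hsum2 : ∑ i ∈ Finset.range n, t * (h * f (s (i+1))) ≤
            ∑ i ∈ Finset.range n, (u (s i) - u (s (i+1))) := Finset.sum_le_sum hterm
        have e1 : ∑ i ∈ Finset.range n, (u (s i) - u (s (i+1))) = u a - u b := by
          rw [Finset.sum_range_sub' (fun i => u (s i)) n, hs0, hsn]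
        have e2 : ∑ i ∈ Finset.range n, t * (h * f (s (i+1))) = t * SR := by
          rw [hSR_def, Finset.mul_sum]
        rw [e1, e2] at hsum2
        linarith
      · have hterm : ∀ i ∈ Finset.range n, -(t * (h * f (s i))) ≤ u (s (i+1)) - u (s i) := by
          intro i hi
          rw [Finset.mem_range] at hi
          have h2 := hIC (s (i+1)) (hsmem (i+1) hi) (s i) (hsmem i hi.le)
          have hst := hstep i
          calc -(t * (h * f (s i))) = t * (f (s i) * (s i - s (i+1))) := by
                have : s i - s (i+1) = -h := by linarith
                rw [this]; ring
            _ ≤ u (s (i+1)) - u (s i) := h2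
        have hsum2 : ∑ i ∈ Finset.range n, -(t * (h * f (s i))) ≤
            ∑ i ∈ Finset.range n, (u (s (i+1)) - u (s i)) := Finset.sum_le_sum hterm
        have e1 : ∑ i ∈ Finset.range n, (u (s (i+1)) - u (s i)) = u b - u a := by
          rw [Finset.sum_range_sub (fun i => u (s i)) n, hs0, hsn]
        have e2 : ∑ i ∈ Finset.range n, -(t * (h * f (s i))) = -(t * SL) := by
          rw [hSL_def, Finset.mul_sum, ← Finset.sum_neg_distrib]
        rw [e1, e2] at hsum2
        linarith
    -- pass to the limit
    have lim : ∀ X c : ℝ, (∀ n : ℕ, 0 < n → X ≥ c - 2*t*(b-a)/n) → X ≥ c := by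
      intro X c hX
      by_contra hc
      push_neg at hc
      obtain ⟨n, hn⟩ := exists_nat_gt (2*t*(b-a)/(c - X))
      have hcx : 0 < c - X := by linarith
      have hd : 0 < 2*t*(b-a)/(c-X) := by positivity
      have hn0 : 0 < n := by exact_mod_cast hd.trans hn
      have hn' : (0:ℝ) < n := by exact_mod_cast hn0
      have h2 : 2*t*(b-a)/n < c - X := by
        rw [div_lt_iff₀ hn']
        rw [div_lt_iff₀ (by linarith : (0:ℝ) < c - X)] at hn
        linarith
      have := hX n hn0
      linarith
    exact ⟨lim _ _ (fun n hn => (main n hn).1), lim _ _ (fun n hn => (main n hn).2)⟩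
  intro a ha b hb
  rcases lt_trichotomy a b with hab | hab | hab
  · exact (key a ha b hb hab).1
  · subst hab; simp
  · have h2 := (key b hb a ha hab).2
    rw [intervalIntegral.integral_symm]
    linarith

lemma fubini_Y {f : ℝ → ℝ} {A : ℝ} (hA : A ≤ 1) (hf : Measurable f)
    (hbd : ∀ x ∈ Set.Ioc A 1, |f x| ≤ 1) :
    ∫ x in A..1, (∫ τ in x..1, f τ) = ∫ τ in A..1, (τ - A) * f τ := by
  set μ := volume.restrict (Set.Ioc A (1:ℝ)) with hμ
  set F : ℝ → ℝ → ℝ := fun x τ => if x < τ then f τ else 0 with hF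
  have step1 : ∀ x ∈ Set.Ioc A 1, (∫ τ in x..1, f τ) = ∫ τ, F x τ ∂μ := by
    intro x hx
    rw [intervalIntegral.integral_of_le hx.2, hμ]
    have : ∫ τ, F x τ ∂(volume.restrict (Set.Ioc A (1:ℝ)))
        = ∫ τ in Set.Ioc A 1, (Set.Ioi x).indicator f τ := by
      apply setIntegral_congr_fun measurableSet_Ioc
      intro τ _
      simp [hF, Set.indicator, Set.mem_Ioi]
    rw [this, MeasureTheory.setIntegral_indicator measurableSet_Ioi]
    congr 1
    rw [Set.Ioc_inter_Ioi, max_eq_right hx.1.le]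
  have houter : ∫ x in A..1, (∫ τ in x..1, f τ) = ∫ x, (∫ τ, F x τ ∂μ) ∂μ := by
    rw [intervalIntegral.integral_of_le hA]
    apply setIntegral_congr_fun measurableSet_Ioc
    intro x hx
    exact step1 x hx
  have hFmeas : Measurable (Function.uncurry F) := by
    apply Measurable.ite (measurableSet_lt measurable_fst measurable_snd)
    · exact hf.comp measurable_snd
    · exact measurable_const
  have hFint : Integrable (Function.uncurry F) (μ.prod μ) := by
    refine ⟨hFmeas.aestronglyMeasurable, ?_⟩
    apply MeasureTheory.HasFiniteIntegral.of_bounded (C := 1)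
    rw [hμ, MeasureTheory.Measure.prod_restrict]
    filter_upwards [ae_restrict_mem (measurableSet_Ioc.prod measurableSet_Ioc)] with p hp
    simp only [Function.uncurry, hF]
    split_ifs
    · simpa [Real.norm_eq_abs] using hbd p.2 hp.2
    · norm_num
  have hswap : ∫ x, (∫ τ, F x τ ∂μ) ∂μ = ∫ τ, (∫ x, F x τ ∂μ) ∂μ :=
    MeasureTheory.integral_integral_swap hFint
  have hinner : ∀ τ ∈ Set.Ioc A 1, (∫ x, F x τ ∂μ) = (τ - A) * f τ := by
    intro τ hτ
    have h1 : ∫ x, F x τ ∂μ = ∫ x in Set.Ioc A 1, (Set.Iio τ).indicator (fun _ => f τ) x := by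
      apply setIntegral_congr_fun measurableSet_Ioc
      intro x _
      simp [hF, Set.indicator, Set.mem_Iio]
    rw [h1, MeasureTheory.setIntegral_indicator measurableSet_Iio]
    have h2 : Set.Ioc A 1 ∩ Set.Iio τ = Set.Ioo A τ := by
      ext x
      simp only [Set.mem_inter_iff, Set.mem_Ioc, Set.mem_Iio, Set.mem_Ioo]
      constructor
      · rintro ⟨⟨h3, _⟩, h5⟩; exact ⟨h3, h5⟩
      · rintro ⟨h3, h5⟩; exact ⟨⟨h3, le_trans h5.le hτ.2⟩, h5⟩
    rw [h2, setIntegral_const, Real.volume_real_Ioo_of_le (by linarith [hτ.1] : A ≤ τ), smul_eq_mul]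
  rw [houter, hswap, intervalIntegral.integral_of_le hA]
  apply setIntegral_congr_fun measurableSet_Ioc
  intro τ hτ
  exact hinner τ hτ

lemma tri_integral {A d : ℝ} (hd : 0 ≤ d) (hd1 : A + d ≤ 1) :
    ∫ x in A..1, max (d - (x - A)) 0 = d^2/2 := by
  have hcont : Continuous (fun x : ℝ => max (d - (x - A)) 0) :=
    (continuous_const.sub (continuous_id.sub continuous_const)).max continuous_const
  have hAd : A ≤ A + d := by linarith
  have h1 : (∫ x in A..(A+d), max (d - (x - A)) 0) = d^2/2 := by
    have hcg : (∫ x in A..(A+d), max (d - (x - A)) 0) = ∫ x in A..(A+d), ((d + A) - x) := by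
      apply intervalIntegral.integral_congr
      intro x hx
      rw [Set.uIcc_of_le hAd] at hx
      show max (d - (x - A)) 0 = (d + A) - x
      rw [max_eq_left (by linarith [hx.2] : (0:ℝ) ≤ d - (x - A))]
      ring
    rw [hcg, intervalIntegral.integral_sub intervalIntegrable_const intervalIntegral.intervalIntegrable_id,
      intervalIntegral.integral_const, integral_id]
    simp only [smul_eq_mul]
    ring
  have h2 : (∫ x in (A+d)..1, max (d - (x - A)) 0) = 0 := by
    have hcg : (∫ x in (A+d)..1, max (d - (x - A)) 0) = ∫ x in (A+d)..1, (0:ℝ) := by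
      apply intervalIntegral.integral_congr
      intro x hx
      rw [Set.uIcc_of_le hd1] at hx
      show max (d - (x - A)) 0 = 0
      exact max_eq_right (by linarith [hx.1] : d - (x - A) ≤ 0)
    rw [hcg]; simp
  have := intervalIntegral.integral_add_adjacent_intervals
    (hcont.intervalIntegrable (μ := volume) A (A+d)) (hcont.intervalIntegrable (μ := volume) (A+d) 1)
  rw [← this, h1, h2, add_zero]
/-- Boundary of the first segment: `x̲ = 1 - (H-L)/(2t)`. -/
noncomputable def xlow (t H L : ℝ) : ℝ := 1 - (H - L) / (2 * t)

/-- Second-segment consumer utility `U(y', x)`. -/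
noncomputable def secU (V t L y x : ℝ) : ℝ :=
  y * (V - x * t - L) + (1 - y) * ((V - t) - (1 - x) * t - L)

/-- Utility of the first-segment consumer located at `x̲` under allocation `y'`. -/
noncomputable def firstW (V t H L y : ℝ) : ℝ :=
  y * (V - xlow t H L * t - L) + (1 - y) * (V - xlow t H L * t - H)

/-- Feasibility without the obedience constraint: constraints (IC2), (IC1a), (IC1b), (IR). -/
def FeasibleNoOB (V t H L : ℝ) (y m : ℝ → ℝ) (m₁ : ℝ) : Prop :=
  Measurable y ∧
  (∀ x ∈ Icc (xlow t H L) 1, y x ∈ Icc (0 : ℝ) 1) ∧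
  Measurable m ∧
  IntervalIntegrable m volume (xlow t H L) 1 ∧
  -- (IC2)
  (∀ x ∈ Icc (xlow t H L) 1, ∀ x' ∈ Icc (xlow t H L) 1,
    secU V t L (y x) x - m x ≥ secU V t L (y x') x - m x') ∧
  -- (IC1a)
  (∀ x' ∈ Icc (xlow t H L) 1,
    (V - xlow t H L * t - H) - m₁ ≥ firstW V t H L (y x') - m x') ∧
  -- (IC1b)
  (∀ x ∈ Icc (xlow t H L) 1,
    secU V t L (y x) x - m x ≥ (V - x * t - H) - m₁) ∧
  -- (IR)
  (∀ x ∈ Icc (xlow t H L) 1, secU V t L (y x) x - m x ≥ 0) ∧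
  ((V - xlow t H L * t - H) - m₁ ≥ 0)

/-- Broker revenue of a reduced mechanism. -/
noncomputable def Revenue (t H L : ℝ) (m : ℝ → ℝ) (m₁ : ℝ) : ℝ :=
  xlow t H L * m₁ + ∫ x in (xlow t H L)..1, m x

/-- When the broker dictates retail prices (no obedience constraints), the optimal
mechanism is the threshold mechanism with threshold `x** = max{x̲, 1/2}`, and
`x** ≤ x* = max{x̲, 1/2, 1 - x̲·(H-L)/L}`. -/
lemma secU_eq (V t L y x : ℝ) : secU V t L y x = (V - t - L) + t * ((1 - x) * (2*y - 1)) := by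
  unfold secU; ring

lemma xlow_pos {t H L : ℝ} (ht : 0 < t) (hHL : H - L < 2 * t) : 0 < xlow t H L := by
  unfold xlow
  have h2t : 0 < 2 * t := by linarith
  have : (H - L) / (2 * t) < 1 := (div_lt_one h2t).mpr hHL
  linarith

lemma xlow_lt_one {t H L : ℝ} (ht : 0 < t) (hLH : L < H) : xlow t H L < 1 := by
  unfold xlow
  have h2t : 0 < 2 * t := by linarith
  have : 0 < (H - L) / (2 * t) := div_pos (by linarith) h2t
  linarith

lemma hHL2 {t H L : ℝ} (ht : 0 < t) : H - L = 2 * t * (1 - xlow t H L) := by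
  unfold xlow; field_simp; ring

lemma firstW_secU {V t H L : ℝ} (ht : 0 < t) (y : ℝ) :
    firstW V t H L y = secU V t L y (xlow t H L) := by
  have h := hHL2 (t := t) (H := H) (L := L) ht
  unfold firstW secU
  have h2 : V - xlow t H L * t - H = (V - t) - (1 - xlow t H L)*t - L := by linarith
  rw [h2]

set_option maxHeartbeats 1000000 in
lemma revenue_bound (V t H L : ℝ) (ht : 0 < t) (hL0 : 0 < L) (hLH : L < H)
    (hHL : H - L < 2 * t) {y m : ℝ → ℝ} {m₁ : ℝ}
    (hF : FeasibleNoOB V t H L y m m₁) :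
    Revenue t H L m m₁ ≤ xlow t H L * (V - xlow t H L * t - H)
      + (1 - xlow t H L) * (V - t - L)
      + t * ((max (xlow t H L) (1/2)) - xlow t H L)
          * (1 - (max (xlow t H L) (1/2)) - xlow t H L) := by
  obtain ⟨hymeas, hyrange, hmmeas, hmint, hIC2, hIC1a, hIC1b, hIR, hIR1⟩ := hF
  set ℓ : ℝ := xlow t H L with hℓ
  set s : ℝ := max ℓ (1/2) with hs
  have hl0 : 0 < ℓ := xlow_pos ht hHL
  have hl1 : ℓ < 1 := xlow_lt_one ht hLH
  set f : ℝ → ℝ := fun x => 2 * y x - 1 with hf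
  set u : ℝ → ℝ := fun x => secU V t L (y x) x - m x with hu
  have hfmeas : Measurable f := (measurable_const.mul hymeas).sub measurable_const
  have hfbd : ∀ x ∈ Icc ℓ 1, |f x| ≤ 1 := by
    intro x hx
    have := hyrange x hx
    rw [abs_le]
    constructor <;> simp only [hf] <;> [linarith [this.1]; linarith [this.2]]
  -- antitonicity of f
  have hanti : AntitoneOn f (Icc ℓ 1) := by
    intro a ha b hb hab
    rcases eq_or_lt_of_le hab with h | hlt
    · subst h; exact le_refl _
    · have h1 := hIC2 a ha b hb
      have h2 := hIC2 b hb a ha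
      simp only [secU_eq] at h1 h2
      simp only [hf]
      nlinarith [mul_pos ht (sub_pos.mpr hlt)]
  -- envelope input
  have hIC' : ∀ p ∈ Icc ℓ 1, ∀ q ∈ Icc ℓ 1, u p - u q ≥ t * (f q * (q - p)) := by
    intro p hp q hq
    have h1 := hIC2 p hp q hq
    simp only [secU_eq] at h1
    simp only [hu, hf, secU_eq]
    nlinarith [h1]
  have hEnv := envelope ht hanti hfbd hIC'
  set Y : ℝ → ℝ := fun x => ∫ τ in x..1, f τ with hY
  have hfint : ∀ a b : ℝ, ℓ ≤ a → a ≤ b → b ≤ 1 → IntervalIntegrable f volume a b := by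
    intro a b h1 h2 h3
    exact intInt_of_bdd h2 hfmeas (fun x hx => hfbd x ⟨le_trans h1 hx.1.le, le_trans hx.2 h3⟩)
  have hYsub : ∀ a b : ℝ, ℓ ≤ a → a ≤ b → b ≤ 1 → Y a - Y b = ∫ τ in a..b, f τ := by
    intro a b h1 h2 h3
    have := intervalIntegral.integral_add_adjacent_intervals (hfint a b h1 h2 h3)
      (hfint b 1 (le_trans h1 h2) h3 le_rfl)
    simp only [hY]; linarith
  have habs : ∀ a b : ℝ, ℓ ≤ a → a ≤ b → b ≤ 1 → |∫ τ in a..b, f τ| ≤ b - a := by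
    intro a b h1 h2 h3
    have := intervalIntegral.norm_integral_le_of_norm_le_const (C := 1) (f := f)
      (a := a) (b := b) ?_
    · rw [Real.norm_eq_abs] at this
      calc |∫ τ in a..b, f τ| ≤ 1 * |b - a| := this
        _ = b - a := by rw [abs_of_nonneg (by linarith)]; ring
    · intro x hx
      rw [Set.uIoc_of_le h2] at hx
      rw [Real.norm_eq_abs]
      exact hfbd x ⟨le_trans h1 hx.1.le, le_trans hx.2 h3⟩
  -- continuity of Y
  have hYcont : ContinuousOn Y (Icc ℓ 1) := by
    have : LipschitzOnWith 1 Y (Icc ℓ 1) := by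
      apply LipschitzOnWith.of_dist_le_mul
      intro a ha b hb
      rw [Real.dist_eq, Real.dist_eq, NNReal.coe_one, one_mul]
      rcases le_total a b with h | h
      · have := habs a b ha.1 h hb.2
        have h2 := hYsub a b ha.1 h hb.2
        rw [h2]
        calc |∫ τ in a..b, f τ| ≤ b - a := this
          _ ≤ |a - b| := by rw [abs_sub_comm]; exact le_abs_self _
      · have := habs b a hb.1 h ha.2
        have h2 := hYsub b a hb.1 h ha.2
        rw [← abs_neg, neg_sub, h2]
        calc |∫ τ in b..a, f τ| ≤ a - b := this
          _ ≤ |a - b| := le_abs_self _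
    exact this.continuousOn
  obtain ⟨bm, hbmIcc, hbmin⟩ := isCompact_Icc.exists_isMinOn
    (Set.nonempty_Icc.mpr hl1.le) hYcont
  set I : ℝ := Y bm with hI
  set d : ℝ := Y ℓ - I with hd
  have hmin : ∀ x ∈ Icc ℓ 1, I ≤ Y x := fun x hx => isMinOn_iff.mp hbmin x hx
  have hd0 : 0 ≤ d := by
    have := hmin ℓ (Set.left_mem_Icc.mpr hl1.le)
    simp only [hd]; linarith
  have hd1 : d ≤ 1 - ℓ := by
    have h1 := hYsub ℓ bm le_rfl hbmIcc.1 hbmIcc.2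
    have h2 := habs ℓ bm le_rfl hbmIcc.1 hbmIcc.2
    have h3 := abs_le.mp h2
    simp only [hd, hI]
    linarith [hbmIcc.2, h3.2, h1]
  -- pointwise lower bound on u
  have hu_lb : ∀ x ∈ Icc ℓ 1, t * (Y x - I) ≤ u x := by
    intro x hx
    have h1 := hEnv x hx bm hbmIcc
    have h2 : (∫ τ in x..bm, f τ) = Y x - Y bm := by
      rcases le_total x bm with h | h
      · exact (hYsub x bm hx.1 h hbmIcc.2).symm
      · rw [intervalIntegral.integral_symm]
        have := hYsub bm x hbmIcc.1 h hx.2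
        linarith
    have hubm : 0 ≤ u bm := hIR bm hbmIcc
    rw [h2] at h1
    simp only [hI]
    nlinarith [h1, hubm]
  -- integrability facts
  have hsec_eq : ∀ x : ℝ, secU V t L (y x) x = (V - t - L) + t * ((1 - x) * f x) := by
    intro x; rw [secU_eq]
  have hsecmeas : Measurable (fun x => secU V t L (y x) x) := by
    simp only [hsec_eq]
    exact measurable_const.add (((measurable_const.sub measurable_id').mul hfmeas).const_mul t)
  have hsecint : IntervalIntegrable (fun x => secU V t L (y x) x) volume ℓ 1 := by
    apply intInt_of_bdd hl1.le hsecmeas (C := |V - t - L| + t)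
    intro x hx
    have hfx := hfbd x ⟨hx.1.le, hx.2⟩
    rw [hsec_eq]
    have h1 : |t * ((1-x)*f x)| ≤ t := by
      rw [abs_mul, abs_of_pos ht, abs_mul]
      have h2 : |1 - x| ≤ 1 := by
        rw [abs_le]; constructor <;> [linarith [hx.2]; linarith [hx.1, hl0]]
      have h3 : |1-x| * |f x| ≤ 1 := mul_le_one₀ h2 (abs_nonneg _) hfx
      nlinarith [mul_le_mul_of_nonneg_left h3 ht.le]
    calc |(V - t - L) + t * ((1-x)*f x)| ≤ |V - t - L| + |t * ((1-x)*f x)| := abs_add_le _ _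
      _ ≤ |V - t - L| + t := by linarith
  have huint : IntervalIntegrable u volume ℓ 1 := hsecint.sub hmint
  have hg1int : IntervalIntegrable (fun x => (1 - x) * f x) volume ℓ 1 := by
    apply intInt_of_bdd hl1.le ((measurable_const.sub measurable_id').mul hfmeas) (C := 1)
    intro x hx
    have hfx := hfbd x ⟨hx.1.le, hx.2⟩
    show |(1 - x) * f x| ≤ 1
    rw [abs_mul]
    have h2 : |1 - x| ≤ 1 := by
      rw [abs_le]; constructor <;> [linarith [hx.2]; linarith [hx.1, hl0]]
    exact mul_le_one₀ h2 (abs_nonneg _) hfx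
  have hg2int : IntervalIntegrable (fun x => (x - ℓ) * f x) volume ℓ 1 := by
    apply intInt_of_bdd hl1.le ((measurable_id'.sub measurable_const).mul hfmeas) (C := 1)
    intro x hx
    have hfx := hfbd x ⟨hx.1.le, hx.2⟩
    show |(x - ℓ) * f x| ≤ 1
    rw [abs_mul]
    have h2 : |x - ℓ| ≤ 1 := by
      rw [abs_le]; constructor <;> [linarith [hx.1, hl0]; linarith [hx.2, hl0]]
    exact mul_le_one₀ h2 (abs_nonneg _) hfx
  have hYint : IntervalIntegrable Y volume ℓ 1 := by
    apply ContinuousOn.intervalIntegrable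
    rw [Set.uIcc_of_le hl1.le]
    exact hYcont
  -- Fubini
  set J : ℝ := ∫ x in ℓ..1, Y x with hJdef
  have hJ : J = ∫ τ in ℓ..1, (τ - ℓ) * f τ := by
    simp only [hJdef, hY]
    exact fubini_Y hl1.le hfmeas (fun x hx => hfbd x ⟨hx.1.le, hx.2⟩)
  -- Ssec computation
  set Ssec : ℝ := ∫ x in ℓ..1, secU V t L (y x) x with hSsecdef
  have hYl : Y ℓ = ∫ τ in ℓ..1, f τ := rfl
  have hsplit : (∫ x in ℓ..1, (1 - x) * f x) = (1 - ℓ) * Y ℓ - J := by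
    have e1 : (∫ x in ℓ..1, ((1 - x) * f x + (x - ℓ) * f x))
        = (∫ x in ℓ..1, (1 - x) * f x) + ∫ x in ℓ..1, (x - ℓ) * f x :=
      intervalIntegral.integral_add hg1int hg2int
    have e2 : (∫ x in ℓ..1, ((1 - x) * f x + (x - ℓ) * f x))
        = ∫ x in ℓ..1, (1 - ℓ) * f x := by
      apply intervalIntegral.integral_congr
      intro x _; ring
    have e3 : (∫ x in ℓ..1, (1 - ℓ) * f x) = (1 - ℓ) * Y ℓ := by
      rw [intervalIntegral.integral_const_mul, hYl]
    rw [hJ]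
    linarith [e1, e2.trans e3]
  have hSsec : Ssec = (1 - ℓ) * (V - t - L) + t * ((1 - ℓ) * Y ℓ - J) := by
    have e1 : Ssec = ∫ x in ℓ..1, ((V - t - L) + t * ((1 - x) * f x)) := by
      simp only [hSsecdef]
      apply intervalIntegral.integral_congr
      intro x _
      show secU V t L (y x) x = (V - t - L) + t * ((1 - x) * f x)
      rw [hsec_eq]
    rw [e1, intervalIntegral.integral_add intervalIntegrable_const (hg1int.const_mul t),
      intervalIntegral.integral_const_mul, intervalIntegral.integral_const, hsplit]
    simp only [smul_eq_mul]
    try ring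
  -- lower bound on ∫ u
  set Su : ℝ := ∫ x in ℓ..1, u x with hSudef
  have hSu : t * (J - (1 - ℓ) * I) ≤ Su := by
    have e1 : (∫ x in ℓ..1, t * (Y x - I)) = t * (J - (1 - ℓ) * I) := by
      rw [intervalIntegral.integral_const_mul,
        intervalIntegral.integral_sub hYint intervalIntegrable_const,
        intervalIntegral.integral_const]
      simp only [smul_eq_mul, hJdef]
      try ring
    have e2 := intervalIntegral.integral_mono_on hl1.le
      ((hYint.sub intervalIntegrable_const).const_mul t) huint hu_lb
    rw [e1] at e2
    exact e2
  -- lower bound on J - (1-ℓ)I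
  have hJI : d^2/2 ≤ J - (1 - ℓ) * I := by
    have hptw : ∀ x ∈ Icc ℓ 1, max (d - (x - ℓ)) 0 ≤ Y x - I := by
      intro x hx
      apply max_le
      · have h1 := hYsub ℓ x le_rfl hx.1 hx.2
        have h2 := (abs_le.mp (habs ℓ x le_rfl hx.1 hx.2)).2
        simp only [hd]
        linarith
      · linarith [hmin x hx]
    have hmaxcont : Continuous (fun x : ℝ => max (d - (x - ℓ)) 0) :=
      (continuous_const.sub (continuous_id.sub continuous_const)).max continuous_const
    have e2 := intervalIntegral.integral_mono_on hl1.le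
      (hmaxcont.intervalIntegrable (μ := volume) ℓ 1)
      (hYint.sub intervalIntegrable_const) hptw
    rw [tri_integral hd0 (by linarith)] at e2
    have e3 : (∫ x in ℓ..1, (Y x - I)) = J - (1 - ℓ) * I := by
      rw [intervalIntegral.integral_sub hYint intervalIntegrable_const,
        intervalIntegral.integral_const]
      simp only [smul_eq_mul, hJdef]
      try ring
    rw [e3] at e2
    exact e2
  -- m₁ bound
  have hm1 : m₁ ≤ (V - ℓ * t - H) - t * d := by
    have h1 := hIC1a ℓ (Set.left_mem_Icc.mpr hl1.le)
    rw [firstW_secU ht] at h1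
    have h2 := hu_lb ℓ (Set.left_mem_Icc.mpr hl1.le)
    simp only [hu] at h2
    simp only [hd] at *
    linarith [h1, h2]
  -- revenue decomposition
  have hrev : Revenue t H L m m₁ = ℓ * m₁ + (Ssec - Su) := by
    unfold Revenue
    have e1 : (∫ x in (xlow t H L)..1, m x) = Ssec - Su := by
      have e2 : (∫ x in ℓ..1, m x)
          = ∫ x in ℓ..1, (secU V t L (y x) x - u x) := by
        apply intervalIntegral.integral_congr
        intro x _; simp only [hu]; ring
      rw [← hℓ, e2, intervalIntegral.integral_sub hsecint huint]
    rw [e1, ← hℓ]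
  -- final assembly
  have hfin : t * ((1 - 2*ℓ) * d) - t * d^2 ≤ t * (s - ℓ) * (1 - s - ℓ) := by
    rcases le_or_gt (1/2 : ℝ) ℓ with h | h
    · have hseq : s = ℓ := max_eq_left (by linarith)
      rw [hseq]
      nlinarith [mul_nonneg (mul_nonneg ht.le hd0) (by linarith : (0:ℝ) ≤ 2*ℓ - 1),
        mul_nonneg ht.le (sq_nonneg d)]
    · have hseq : s = 1/2 := max_eq_right (by linarith)
      rw [hseq]
      nlinarith [mul_nonneg ht.le (sq_nonneg (d - (1/2 - ℓ)))]
  have hm1' : ℓ * m₁ ≤ ℓ * ((V - ℓ * t - H) - t * d) :=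
    mul_le_mul_of_nonneg_left hm1 hl0.le
  have hP : t * (d^2/2) ≤ t * (J - (1 - ℓ) * I) := mul_le_mul_of_nonneg_left hJI ht.le
  have h2 : t*((1-ℓ)*Y ℓ - J) - t*(J - (1-ℓ)*I) = t*((1-ℓ)*d) - 2*(t*(J-(1-ℓ)*I)) := by
    simp only [hd]; ring
  have key1 : Ssec - Su ≤ (1-ℓ)*(V - t - L) + t*((1-ℓ)*d) - 2*(t*(d^2/2)) := by
    rw [hSsec]
    linarith only [hSu, hP, h2]
  rw [hrev]
  clear_value Ssec Su d I J Y s ℓ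
  linarith only [hm1', key1, hfin]

set_option maxHeartbeats 1000000 in
theorem statement2 (V t H L : ℝ) (ht : 0 < t) (hL0 : 0 < L) (hLH : L < H)
    (hHL : H - L < 2 * t) (hV : 0 < V - t - H) :
    max (xlow t H L) (1 / 2) ∈ Icc (xlow t H L) 1 ∧
    max (xlow t H L) (1 / 2)
      ≤ max (max (xlow t H L) (1 / 2)) (1 - xlow t H L * (H - L) / L) ∧
    ∃ m : ℝ → ℝ, ∃ m₁ : ℝ,
      FeasibleNoOB V t H L
        (fun x => if x ≤ max (xlow t H L) (1 / 2) then 1 else 1 / 2) m m₁ ∧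
      ∀ y' m' m₁', FeasibleNoOB V t H L y' m' m₁' →
        Revenue t H L m' m₁' ≤ Revenue t H L m m₁ := by
  set ℓ : ℝ := xlow t H L with hℓ
  set s : ℝ := max ℓ (1/2) with hs
  have hl0 : 0 < ℓ := xlow_pos ht hHL
  have hl1 : ℓ < 1 := xlow_lt_one ht hLH
  have hls : ℓ ≤ s := le_max_left _ _
  have hs1 : s ≤ 1 := max_le hl1.le (by norm_num)
  set mm : ℝ → ℝ := fun x => if x ≤ s then V - L - t*s else V - t - L with hmm
  set m₁ : ℝ := V - ℓ * t - H - t * (s - ℓ) with hm₁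
  have hmsIic : MeasurableSet {x : ℝ | x ≤ s} := measurableSet_Iic
  have hmmbd : ∀ x : ℝ, |mm x| ≤ |V - L - t*s| + |V - t - L| := by
    intro x
    by_cases h : x ≤ s <;> simp only [hmm, h, if_true, if_false]
    · exact le_add_of_nonneg_right (abs_nonneg _)
    · exact le_add_of_nonneg_left (abs_nonneg _)
  refine ⟨⟨hls, hs1⟩, le_max_left _ _, mm, m₁, ⟨?_, ?_, ?_, ?_, ?_, ?_, ?_, ?_, ?_⟩, ?_⟩
  · exact Measurable.ite hmsIic measurable_const measurable_const
  · intro x _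
    by_cases h : x ≤ s <;> simp [h] <;> norm_num
  · exact Measurable.ite hmsIic measurable_const measurable_const
  · apply intInt_of_bdd hl1.le (Measurable.ite hmsIic measurable_const measurable_const)
      (C := |V - L - t*s| + |V - t - L|)
    exact fun x _ => hmmbd x
  · -- IC2
    intro x hx x' hx'
    by_cases h1 : x ≤ s <;> by_cases h2 : x' ≤ s <;>
      simp only [hmm, if_pos, if_neg, h1, h2, if_true, if_false, secU_eq] <;>
      nlinarith [mul_nonneg ht.le (sub_nonneg.mpr hx.1), ht.le,
        mul_nonneg ht.le (sub_nonneg.mpr hx.2)]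
  · -- IC1a
    intro x' hx'
    rw [firstW_secU ht, ← hℓ]
    by_cases h2 : x' ≤ s <;>
      simp only [hmm, hm₁, if_pos, if_neg, h2, if_true, if_false, secU_eq] <;>
      nlinarith [mul_nonneg ht.le (sub_nonneg.mpr hls), ht.le]
  · -- IC1b
    intro x hx
    by_cases h1 : x ≤ s <;>
      simp only [hmm, hm₁, if_pos, if_neg, h1, if_true, if_false, secU_eq] <;>
      nlinarith [mul_nonneg ht.le (sub_nonneg.mpr hls), ht.le, hx.1, hx.2]
  · -- IR
    intro x hx
    by_cases h1 : x ≤ s <;>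
      simp only [hmm, if_pos, if_neg, h1, if_true, if_false, secU_eq] <;>
      nlinarith [mul_nonneg ht.le (sub_nonneg.mpr hx.2), ht.le]
  · -- IR1
    simp only [hm₁, ← hℓ]
    nlinarith [mul_nonneg ht.le (sub_nonneg.mpr hls)]
  · -- optimality
    intro y' m' m₁' hF'
    have hb := revenue_bound V t H L ht hL0 hLH hHL hF'
    rw [← hℓ, ← hs] at hb
    have hR : Revenue t H L mm m₁ = ℓ * (V - ℓ * t - H)
        + (1 - ℓ) * (V - t - L) + t * (s - ℓ) * (1 - s - ℓ) := by
      have hi1 : IntervalIntegrable mm volume ℓ s := by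
        apply intInt_of_bdd hls (Measurable.ite hmsIic measurable_const measurable_const)
          (C := |V - L - t*s| + |V - t - L|)
        exact fun x _ => hmmbd x
      have hi2 : IntervalIntegrable mm volume s 1 := by
        apply intInt_of_bdd hs1 (Measurable.ite hmsIic measurable_const measurable_const)
          (C := |V - L - t*s| + |V - t - L|)
        exact fun x _ => hmmbd x
      have e1 : (∫ x in ℓ..s, mm x) = (s - ℓ) * (V - L - t*s) := by
        have : (∫ x in ℓ..s, mm x) = ∫ x in ℓ..s, (V - L - t*s) := by
          apply intervalIntegral.integral_congr
          intro x hxm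
          rw [Set.uIcc_of_le hls] at hxm
          simp only [hmm]
          rw [if_pos hxm.2]
        rw [this, intervalIntegral.integral_const, smul_eq_mul]
      have e2 : (∫ x in s..1, mm x) = (1 - s) * (V - t - L) := by
        have : (∫ x in s..1, mm x) = ∫ x in s..1, (V - t - L) := by
          apply intervalIntegral.integral_congr_ae
          apply MeasureTheory.ae_of_all
          intro x hxm
          rw [Set.uIoc_of_le hs1] at hxm
          simp only [hmm]
          rw [if_neg (not_le.mpr hxm.1)]
        rw [this, intervalIntegral.integral_const, smul_eq_mul]
      have e3 := intervalIntegral.integral_add_adjacent_intervals hi1 hi2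
      unfold Revenue
      rw [← hℓ, ← e3, e1, e2, hm₁]
      ring
    rw [hR]
    exact hb
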